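/- Let f be a holomorphic function on the right half-plane H with |f| < M, admitting an asymptotic expansion ∑_{j=0}^∞ c_j e^{-λ_j z}. Then |c_j| ≤ M for every j. -/

import Mathlib

open Filter Complex

/-- `∑_j c j e^{-lam j z}` is an asymptotic expansion of `f` on the right half-plane,
for a strictly increasing sequence of levels `0 = lam 0 < lam 1 < ⋯ → ∞`. -/
def HasHolAsymExp (f : ℂ → ℂ) (lam : ℕ → ℝ) (c : ℕ → ℂ) : Prop :=
  lam 0 = 0 ∧ StrictMono lam ∧ Filter.Tendsto lam Filter.atTop Filter.atTop ∧
    ∀ N : ℕ, Filter.Tendsto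
      (fun z : ℂ => ‖
          f z - ∑ j ∈ Finset.range (N + 1), c j * Complex.exp (-(lam j : ℂ) * z)‖ *
        Real.exp (lam N * z.re))
      (Filter.comap Complex.re Filter.atTop) (nhds 0)

/-- **Cauchy-type estimates for the coefficients of an asymptotic expansion.**
If `f` is holomorphic on the right half-plane with `|f| < M` and has an asymptotic
expansion `∑ c j e^{-lam j z}`, then `|c j| ≤ M` for every `j`. -/
theorem stmt_7 (f : ℂ → ℂ) (lam : ℕ → ℝ) (c : ℕ → ℂ) (M : ℝ)
    (hf : DifferentiableOn ℂ f {z : ℂ | 0 < z.re})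
    (hbdd : ∀ z : ℂ, 0 < z.re → ‖f z‖ < M)
    (hae : HasHolAsymExp f lam c) :
    ∀ j, ‖c j‖ ≤ M := by
  obtain ⟨h0, hmono, -, hexp⟩ := hae
  intro N
  have hM : 0 < M := lt_of_le_of_lt (norm_nonneg (f 1)) (hbdd 1 (by norm_num))
  have hlamnn : ∀ j, 0 ≤ lam j := fun j => h0 ▸ hmono.monotone (Nat.zero_le j)
  set S : ℂ → ℂ := fun z => ∑ j ∈ Finset.range (N + 1), c j * Complex.exp (-(lam j : ℂ) * z)
    with hSdef
  set g : ℂ → ℂ := fun z => f z * Complex.exp ((lam N : ℂ) * z) with hgdef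
  have hfc : ContinuousOn f {z : ℂ | 0 < z.re} := hf.continuousOn
  -- continuity of the `t ↦ f (σ + t I)` slices
  have hslice : ∀ σ : ℝ, 0 < σ → Continuous fun t : ℝ => f ((σ : ℂ) + t * I) := by
    intro σ hσ
    have := hfc.comp_continuous (f := fun t : ℝ => (σ : ℂ) + t * I) (by fun_prop)
      (fun t => by simp [Set.mem_setOf_eq, hσ])
    exact this
  have hScont : Continuous S := by
    refine continuous_finset_sum _ fun j _ => ?_
    fun_prop
  -- Main claim: for every σ₀ > 0, |c N| ≤ M e^{λ_N σ₀}.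
  have claim : ∀ σ₀ : ℝ, 0 < σ₀ → ‖c N‖ ≤ M * Real.exp (lam N * σ₀) := by
    intro σ₀ hσ₀
    refine le_of_forall_pos_le_add fun ε hε => ?_
    -- choose abscissa σ where the remainder is uniformly < ε/2
    have h1 : ∀ᶠ z in comap Complex.re atTop,
        ‖f z - S z‖ * Real.exp (lam N * z.re) < ε / 2 :=
      (hexp N).eventually_lt_const (by positivity)
    rw [Filter.eventually_comap] at h1
    obtain ⟨a, ha⟩ := Filter.eventually_atTop.mp h1
    set σ : ℝ := max a σ₀ with hσdef
    have hσσ₀ : σ₀ ≤ σ := le_max_right _ _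
    have hσpos : 0 < σ := lt_of_lt_of_le hσ₀ hσσ₀
    have hrem : ∀ t : ℝ, ‖f ((σ : ℂ) + t * I) - S ((σ : ℂ) + t * I)‖
        * Real.exp (lam N * σ) ≤ ε / 2 := by
      intro t
      have := ha σ (le_max_left _ _) ((σ : ℂ) + t * I) (by simp)
      simpa using this.le
    -- constants
    set K : ℝ := ∑ j ∈ Finset.range N,
      ‖c j‖ * (Real.exp ((lam N - lam j) * σ) * (2 / (lam N - lam j))) with hKdef
    set C : ℝ := 2 * ((σ - σ₀) * (M * Real.exp (lam N * σ))) with hCdef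
    have hK0 : 0 ≤ K := by
      refine Finset.sum_nonneg fun j hj => ?_
      have hlt : lam j < lam N := hmono (Finset.mem_range.mp hj)
      have h2 : (0:ℝ) < lam N - lam j := by linarith
      positivity
    have hC0 : 0 ≤ C := by
      have h2 : (0:ℝ) ≤ σ - σ₀ := by linarith
      positivity
    set T : ℝ := max 1 ((K + C) / ε) with hTdef
    have hT1 : (1:ℝ) ≤ T := le_max_left _ _
    have hT0 : (0:ℝ) < T := lt_of_lt_of_le one_pos hT1
    have hTε : K + C ≤ T * ε := by
      have := le_max_right 1 ((K + C) / ε)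
      calc K + C = ((K + C) / ε) * ε := by field_simp
        _ ≤ T * ε := by nlinarith
    -- the vertical-mean integrals
    set Iv : ℝ → ℂ := fun s => ∫ t in (-T)..T, g ((s : ℂ) + t * I) with hIvdef
    have hgcont : ∀ s : ℝ, 0 < s → Continuous fun t : ℝ => g ((s : ℂ) + t * I) := by
      intro s hs
      simp only [hgdef]
      exact (hslice s hs).mul (by fun_prop)
    -- Estimate 3 : boundary bound at σ₀
    have est3 : ‖Iv σ₀‖ ≤ M * Real.exp (lam N * σ₀) * (2 * T) := by
      have hb : ∀ t ∈ Set.uIoc (-T) T, ‖g ((σ₀ : ℂ) + t * I)‖ ≤ M * Real.exp (lam N * σ₀) := by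
        intro t _
        have h2 : ‖Complex.exp ((lam N : ℂ) * ((σ₀ : ℂ) + t * I))‖
            = Real.exp (lam N * σ₀) := by
          rw [Complex.norm_exp]; congr 1; simp
        simp only [hgdef, norm_mul, h2]
        exact mul_le_mul_of_nonneg_right (hbdd _ (by simp [hσ₀])).le (Real.exp_nonneg _)
      have hTT : |T - (-T)| = 2 * T := by rw [_root_.abs_of_nonneg] <;> linarith
      have := intervalIntegral.norm_integral_le_of_norm_le_const hb
      rw [hTT] at this
      exact this
    -- Estimate 1 : Cauchy's theorem on the rectangle
    have est1 : ‖Iv σ - Iv σ₀‖ ≤ C := by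
      have hsub : Set.uIcc ((σ₀:ℂ) + ((-T:ℝ):ℂ) * I).re ((σ:ℂ) + ((T:ℝ):ℂ) * I).re ×ℂ
          Set.uIcc ((σ₀:ℂ) + ((-T:ℝ):ℂ) * I).im ((σ:ℂ) + ((T:ℝ):ℂ) * I).im ⊆
          {z : ℂ | 0 < z.re} := by
        intro z hz
        have := hz.1
        simp only [Complex.add_re, Complex.ofReal_re, Complex.mul_re, Complex.I_re,
          Complex.ofReal_im, Complex.I_im] at this ⊢
        rw [Set.uIcc_of_le (by simpa using hσσ₀)] at this
        have := this.1
        simp only [Set.mem_setOf_eq]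
        nlinarith [hσ₀]
      have hdiff : DifferentiableOn ℂ g (Set.uIcc ((σ₀:ℂ) + ((-T:ℝ):ℂ) * I).re
          ((σ:ℂ) + ((T:ℝ):ℂ) * I).re ×ℂ
          Set.uIcc ((σ₀:ℂ) + ((-T:ℝ):ℂ) * I).im ((σ:ℂ) + ((T:ℝ):ℂ) * I).im) := by
        refine DifferentiableOn.mono ?_ hsub
        exact hf.mul (Differentiable.differentiableOn (by fun_prop))
      have hrect := Complex.integral_boundary_rect_eq_zero_of_differentiableOn g
        ((σ₀:ℂ) + ((-T:ℝ):ℂ) * I) ((σ:ℂ) + ((T:ℝ):ℂ) * I) hdiff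
      simp only [Complex.add_re, Complex.add_im, Complex.ofReal_re, Complex.ofReal_im,
        Complex.mul_re, Complex.mul_im, Complex.I_re, Complex.I_im, mul_zero, mul_one,
        zero_mul, sub_zero, zero_add, add_zero, zero_sub, smul_eq_mul] at hrect
      -- hrect : (∫ x in σ₀..σ, g (x + (-T)*I)) - (∫ x in σ₀..σ, g (x + T*I))
      --        + I * (∫ y in -T..T, g (σ + y*I)) - I * (∫ y in -T..T, g (σ₀ + y*I)) = 0
      have hA : ∀ s ∈ Set.uIoc σ₀ σ, ∀ τ : ℝ,
          ‖g ((s : ℂ) + τ * I)‖ ≤ M * Real.exp (lam N * σ) := by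
        intro s hs τ
        rw [Set.uIoc_of_le hσσ₀] at hs
        have hs0 : 0 < s := lt_trans hσ₀ hs.1
        have h2 : ‖Complex.exp ((lam N : ℂ) * ((s : ℂ) + τ * I))‖
            = Real.exp (lam N * s) := by
          rw [Complex.norm_exp]; congr 1; simp
        simp only [hgdef, norm_mul, h2]
        have := (hbdd ((s:ℂ) + τ * I) (by simp [hs0])).le
        have hexple : Real.exp (lam N * s) ≤ Real.exp (lam N * σ) :=
          Real.exp_le_exp.mpr (mul_le_mul_of_nonneg_left hs.2 (hlamnn N))
        exact mul_le_mul this hexple (Real.exp_nonneg _) hM.le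
      have hhor : ∀ τ : ℝ, ‖∫ x in σ₀..σ, g ((x:ℂ) + (τ:ℝ) * I)‖
          ≤ M * Real.exp (lam N * σ) * (σ - σ₀) := by
        intro τ
        have hss : |σ - σ₀| = σ - σ₀ := by rw [_root_.abs_of_nonneg] <;> linarith
        have := intervalIntegral.norm_integral_le_of_norm_le_const
          (fun x hx => hA x hx τ)
        rw [hss] at this
        exact this
      have hIeq : I * (Iv σ - Iv σ₀) =
          (∫ x in σ₀..σ, g ((x:ℂ) + ((T:ℝ):ℂ) * I)) -
          (∫ x in σ₀..σ, g ((x:ℂ) + ((-T:ℝ):ℂ) * I)) := by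
        simp only [hIvdef]
        push_cast at hrect ⊢
        linear_combination hrect
      have h3 : ‖Iv σ - Iv σ₀‖ = ‖I * (Iv σ - Iv σ₀)‖ := by
        rw [norm_mul, Complex.norm_I, one_mul]
      rw [h3, hIeq]
      refine (norm_sub_le _ _).trans ?_
      have hh1 := hhor T
      have hh2 := hhor (-T)
      rw [hCdef]
      push_cast at hh1 hh2 ⊢
      linarith
    -- Estimate 2 : the value at σ is close to 2T·c N
    have est2 : ‖Iv σ - ((2 * T : ℝ) : ℂ) * c N‖ ≤ ε / 2 * (2 * T) + K := by
      set r : ℝ → ℂ := fun t =>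
        (f ((σ:ℂ) + t * I) - S ((σ:ℂ) + t * I)) * Complex.exp ((lam N : ℂ) * ((σ:ℂ) + t * I))
        with hrdef
      set e : ℕ → ℝ → ℂ := fun j t =>
        c j * Complex.exp (((lam N - lam j : ℝ) : ℂ) * ((σ:ℂ) + t * I)) with hedef
      have hpt : ∀ t : ℝ, g ((σ:ℂ) + t * I) = r t + ∑ j ∈ Finset.range (N + 1), e j t := by
        intro t
        set z : ℂ := (σ:ℂ) + t * I
        have key : S z * Complex.exp ((lam N : ℂ) * z) = ∑ j ∈ Finset.range (N + 1), e j t := by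
          rw [hSdef]
          simp only
          rw [Finset.sum_mul]
          refine Finset.sum_congr rfl fun j _ => ?_
          rw [hedef]
          simp only
          have harg : -(lam j:ℂ) * z + (lam N:ℂ) * z = ((lam N - lam j : ℝ):ℂ) * z := by
            push_cast; ring
          rw [mul_assoc, ← Complex.exp_add, harg]
        have : g z = (f z - S z) * Complex.exp ((lam N : ℂ) * z)
            + S z * Complex.exp ((lam N : ℂ) * z) := by
          simp only [hgdef]; ring
        rw [this, key, hrdef]
      have hrcont : Continuous r := by
        simp only [hrdef]
        exact ((hslice σ hσpos).sub (by fun_prop)).mul (by fun_prop)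
      have hecont : ∀ j, Continuous (e j) := fun j => by simp only [hedef]; fun_prop
      have hsplit : Iv σ = (∫ t in (-T)..T, r t)
          + ∑ j ∈ Finset.range (N + 1), ∫ t in (-T)..T, e j t := by
        rw [hIvdef]
        simp only
        rw [intervalIntegral.integral_congr (fun t _ => hpt t),
          intervalIntegral.integral_add (hrcont.intervalIntegrable _ _)
            ((continuous_finset_sum _ fun j _ => hecont j).intervalIntegrable _ _),
          intervalIntegral.integral_finset_sum
            (fun j _ => (hecont j).intervalIntegrable _ _)]
      have htop : (∫ t in (-T)..T, e N t) = ((2 * T : ℝ) : ℂ) * c N := by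
        have : ∀ t : ℝ, e N t = c N := by
          intro t
          simp [hedef]
        rw [intervalIntegral.integral_congr (fun t _ => this t),
          intervalIntegral.integral_const]
        rw [Complex.real_smul]
        push_cast
        ring
      have hEj : ∀ j ∈ Finset.range N, ‖∫ t in (-T)..T, e j t‖
          ≤ ‖c j‖ * (Real.exp ((lam N - lam j) * σ) * (2 / (lam N - lam j))) := by
        intro j hj
        have hμ : 0 < lam N - lam j := by
          have := hmono (Finset.mem_range.mp hj); linarith
        set μ : ℝ := lam N - lam j with hμdef
        have hform : ∀ t : ℝ, e j t =
            (c j * Complex.exp (((μ * σ : ℝ) : ℂ))) * Complex.exp (((μ:ℂ) * I) * (t:ℂ)) := by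
          intro t
          have harg : ((lam N - lam j : ℝ):ℂ) * ((σ:ℂ) + t * I)
              = ((μ * σ : ℝ) : ℂ) + ((μ:ℂ) * I) * (t:ℂ) := by
            rw [hμdef]; push_cast; ring
          rw [hedef]
          simp only
          rw [harg, Complex.exp_add]
          ring
        have hne : ((μ:ℂ) * I) ≠ 0 := by
          simp [Complex.ext_iff, hμ.ne']
        rw [intervalIntegral.integral_congr (fun t _ => hform t),
          intervalIntegral.integral_const_mul, _root_.integral_exp_mul_complex hne]
        rw [norm_mul, norm_mul, norm_div]
        have h1 : ‖Complex.exp (((μ * σ : ℝ) : ℂ))‖ = Real.exp (μ * σ) := by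
          rw [Complex.norm_exp]; simp
        have h2 : ‖Complex.exp ((μ:ℂ) * I * (T:ℂ)) - Complex.exp ((μ:ℂ) * I * ((-T:ℝ):ℂ))‖
            ≤ 2 := by
          refine (norm_sub_le _ _).trans ?_
          have e1 : ‖Complex.exp ((μ:ℂ) * I * (T:ℂ))‖ = 1 := by
            rw [Complex.norm_exp]; simp
          have e2 : ‖Complex.exp ((μ:ℂ) * I * ((-T:ℝ):ℂ))‖ = 1 := by
            rw [Complex.norm_exp]; simp
          rw [e1, e2]; norm_num
        have h3 : ‖(μ:ℂ) * I‖ = μ := by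
          rw [norm_mul, Complex.norm_I,
            Complex.norm_real, Real.norm_eq_abs, _root_.abs_of_pos hμ, mul_one]
        rw [h1, h3]
        calc ‖c j‖ * Real.exp (μ * σ) *
            (‖Complex.exp ((μ:ℂ) * I * (T:ℂ)) - Complex.exp ((μ:ℂ) * I * ((-T:ℝ):ℂ))‖ / μ)
            ≤ ‖c j‖ * Real.exp (μ * σ) * (2 / μ) := by
              gcongr
          _ = ‖c j‖ * (Real.exp (μ * σ) * (2 / μ)) := by ring
      have hR : ‖∫ t in (-T)..T, r t‖ ≤ ε / 2 * (2 * T) := by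
        have hb : ∀ t ∈ Set.uIoc (-T) T, ‖r t‖ ≤ ε / 2 := by
          intro t _
          rw [hrdef]
          simp only [norm_mul]
          have h2 : ‖Complex.exp ((lam N : ℂ) * ((σ:ℂ) + t * I))‖
              = Real.exp (lam N * σ) := by
            rw [Complex.norm_exp]; congr 1; simp
          rw [h2]
          exact hrem t
        have hTT : |T - (-T)| = 2 * T := by rw [_root_.abs_of_nonneg] <;> linarith
        have := intervalIntegral.norm_integral_le_of_norm_le_const hb
        rw [hTT] at this
        exact this
      have : Iv σ - ((2 * T : ℝ) : ℂ) * c N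
          = (∫ t in (-T)..T, r t) + ∑ j ∈ Finset.range N, ∫ t in (-T)..T, e j t := by
        rw [hsplit, Finset.sum_range_succ, htop]; ring
      rw [this]
      calc ‖(∫ t in (-T)..T, r t) + ∑ j ∈ Finset.range N, ∫ t in (-T)..T, e j t‖
          ≤ ‖∫ t in (-T)..T, r t‖ + ‖∑ j ∈ Finset.range N, ∫ t in (-T)..T, e j t‖ :=
            norm_add_le _ _
        _ ≤ ε / 2 * (2 * T) + K := by
            gcongr
            refine (norm_sum_le _ _).trans ?_
            rw [hKdef]
            exact Finset.sum_le_sum hEj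
    -- combine
    have hdecomp : ((2 * T : ℝ) : ℂ) * c N
        = -(Iv σ - ((2 * T : ℝ) : ℂ) * c N) + (Iv σ - Iv σ₀) + Iv σ₀ := by ring
    have hnorm : 2 * T * ‖c N‖
        ≤ (ε / 2 * (2 * T) + K) + C + M * Real.exp (lam N * σ₀) * (2 * T) := by
      have h4 : ‖((2 * T : ℝ) : ℂ) * c N‖ = 2 * T * ‖c N‖ := by
        rw [norm_mul, Complex.norm_real, Real.norm_eq_abs, _root_.abs_of_pos (by linarith)]
      have hX : ‖((2 * T : ℝ) : ℂ) * c N‖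
          ≤ ‖Iv σ - ((2 * T : ℝ) : ℂ) * c N‖ + ‖Iv σ - Iv σ₀‖ + ‖Iv σ₀‖ := by
        conv_lhs => rw [hdecomp]
        refine (norm_add_le _ _).trans (add_le_add_left ?_ _)
        refine (norm_add_le _ _).trans (add_le_add_left ?_ _)
        rw [norm_neg]
      rw [h4] at hX
      linarith [est1, est2, est3, hX]
    have h5 : 2 * T * ‖c N‖ ≤ 2 * T * (M * Real.exp (lam N * σ₀) + ε) := by
      nlinarith [hnorm, hTε]
    exact le_of_mul_le_mul_left h5 (by positivity)
  -- let σ₀ → 0⁺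
  have hcont : Continuous fun σ₀ : ℝ => M * Real.exp (lam N * σ₀) := by fun_prop
  have htend : Tendsto (fun σ₀ : ℝ => M * Real.exp (lam N * σ₀)) (nhdsWithin 0 (Set.Ioi 0))
      (nhds M) := by
    have h6 : Tendsto (fun σ₀ : ℝ => M * Real.exp (lam N * σ₀)) (nhdsWithin 0 (Set.Ioi 0))
        (nhds (M * Real.exp (lam N * 0))) :=
      (hcont.tendsto 0).mono_left nhdsWithin_le_nhds
    simpa using h6
  exact ge_of_tendsto htend (eventually_nhdsWithin_of_forall fun x hx => claim x hx)
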